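/- Let c > 0, m = 1 and β > 0, and define u₀(z) = (1 + (β/c²) e^{−c z})^{−1/β}, u_c(z) = (c z + 2) u₀(z) / ( c (c² e^{c z} + β) ) and w_c(z) = −z e^{−c z} u₀(z)^β + β e^{−c z} u₀(z)^{β−1} u_c(z). Then w_c(z) → 2c/β as z → −∞; in particular w_c does not tend to zero at −∞ and w_c is not square-integrable on ℝ, so the generalised eigenfunction at λ = 0 fails to exist in L²(ℝ) in the linear-consumption case m = 1. -/

import Mathlib

open Real Filter MeasureTheory

theorem stmt_11 (c β : ℝ) (hc : 0 < c) (hβ : 0 < β)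
    (u₀ uc wc : ℝ → ℝ)
    (hu : ∀ z : ℝ, u₀ z = (1 + (β / c ^ 2) * Real.exp (-c * z)) ^ (-(1 / β)))
    (huc : ∀ z : ℝ, uc z = (c * z + 2) * u₀ z / (c * (c ^ 2 * Real.exp (c * z) + β)))
    (hwc : ∀ z : ℝ, wc z = -z * Real.exp (-c * z) * u₀ z ^ β
        + β * Real.exp (-c * z) * u₀ z ^ (β - 1) * uc z) :
    Tendsto wc atBot (nhds (2 * c / β)) ∧
    ¬ Tendsto wc atBot (nhds 0) ∧
    ¬ MemLp wc 2 (volume : Measure ℝ) := by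
  have hc2 : (0:ℝ) < c ^ 2 := by positivity
  have hXpos : ∀ z : ℝ, 0 < 1 + (β / c ^ 2) * Real.exp (-c * z) := by
    intro z; positivity
  have hu0pos : ∀ z : ℝ, 0 < u₀ z := by
    intro z; rw [hu z]; exact Real.rpow_pos_of_pos (hXpos z) _
  have hub : ∀ z : ℝ, u₀ z ^ β = (1 + (β / c ^ 2) * Real.exp (-c * z))⁻¹ := by
    intro z
    rw [hu z, ← Real.rpow_mul (hXpos z).le, show -(1/β)*β = -1 by field_simp,
      Real.rpow_neg_one]
  have hA : ∀ z : ℝ, Real.exp (-c*z) * u₀ z ^ β = c^2 / (c^2 * Real.exp (c*z) + β) := by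
    intro z
    have hD : (0:ℝ) < c ^ 2 * Real.exp (c*z) + β := by positivity
    have hE : (0:ℝ) < Real.exp (c*z) := Real.exp_pos _
    rw [hub, show -c*z = -(c*z) by ring, Real.exp_neg]
    rw [eq_div_iff hD.ne']
    field_simp
  have key : ∀ z : ℝ, wc z
      = (-z * c^4 * Real.exp (c*z) + 2*β*c) / (c^2 * Real.exp (c*z) + β)^2 := by
    intro z
    have hD : (0:ℝ) < c ^ 2 * Real.exp (c*z) + β := by positivity
    have hE : (0:ℝ) < Real.exp (c*z) := Real.exp_pos _
    rw [hwc, huc, Real.rpow_sub (hu0pos z), Real.rpow_one,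
      show -z * Real.exp (-c*z) * u₀ z ^ β
          + β * Real.exp (-c*z) * (u₀ z ^ β / u₀ z)
            * ((c*z+2) * u₀ z / (c*(c^2*Real.exp (c*z)+β)))
        = -z * (Real.exp (-c*z) * u₀ z ^ β)
          + β * (Real.exp (-c*z) * u₀ z ^ β) * ((c*z+2)/(c*(c^2*Real.exp (c*z)+β)))
        from by field_simp [(hu0pos z).ne', hc.ne', hD.ne'],
      hA z]
    field_simp [hD.ne', hc.ne']
    ring
  -- limits
  have hcz : Tendsto (fun z : ℝ => c * z) atBot atBot := tendsto_id.const_mul_atBot hc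
  have hEtend : Tendsto (fun z : ℝ => Real.exp (c*z)) atBot (nhds 0) :=
    Real.tendsto_exp_atBot.comp hcz
  have hztend : Tendsto (fun z : ℝ => z * Real.exp (c*z)) atBot (nhds 0) := by
    have h1 : Tendsto (fun x : ℝ => x ^ 1 * Real.exp (-x)) atTop (nhds 0) :=
      Real.tendsto_pow_mul_exp_neg_atTop_nhds_zero 1
    have h2 : Tendsto (fun z : ℝ => (-z) ^ 1 * Real.exp (-(-z))) atBot (nhds 0) :=
      h1.comp tendsto_neg_atBot_atTop
    have h3 : Tendsto (fun t : ℝ => t * Real.exp t) atBot (nhds 0) := by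
      have := h2.neg
      simp only [neg_zero] at this
      exact this.congr fun t => by ring_nf
    have h4 : Tendsto (fun z : ℝ => (c*z) * Real.exp (c*z)) atBot (nhds 0) := h3.comp hcz
    have h5 := h4.const_mul (1/c)
    simp only [mul_zero] at h5
    exact h5.congr fun z => by field_simp
  have hnum : Tendsto (fun z : ℝ => -z * c^4 * Real.exp (c*z) + 2*β*c) atBot
      (nhds (2*β*c)) := by
    have h := (hztend.const_mul (-(c^4))).add_const (2*β*c)
    simp only [mul_zero, zero_add] at h
    exact h.congr fun z => by ring
  have hden : Tendsto (fun z : ℝ => (c^2 * Real.exp (c*z) + β)^2) atBot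
      (nhds (β^2)) := by
    have h := ((hEtend.const_mul (c^2)).add_const β).pow 2
    simpa using h
  have hmain : Tendsto wc atBot (nhds (2 * c / β)) := by
    have h := hnum.div hden (by positivity)
    rw [show (2*β*c)/β^2 = 2*c/β from by field_simp] at h
    exact h.congr fun z => (key z).symm
  refine ⟨hmain, ?_, ?_⟩
  · intro h0
    have := tendsto_nhds_unique hmain h0
    have hpos : (0:ℝ) < 2*c/β := by positivity
    rw [this] at hpos; exact lt_irrefl _ hpos
  · intro h
    have hev : ∀ᶠ z in atBot, c/β < wc z :=
      hmain.eventually (eventually_gt_nhds (by rw [div_lt_div_iff₀ hβ hβ]; nlinarith))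
    obtain ⟨a, ha⟩ := eventually_atBot.1 hev
    have hr : MemLp (fun _ : ℝ => c/β) 2 (volume.restrict (Set.Iic a)) := by
      apply MemLp.mono (h.restrict (Set.Iic a)) aestronglyMeasurable_const
      refine (ae_restrict_iff' measurableSet_Iic).2 (Eventually.of_forall fun z hz => ?_)
      rw [Real.norm_eq_abs, Real.norm_eq_abs, abs_of_pos (by positivity)]
      exact le_trans (ha z hz).le (le_abs_self _)
    rw [memLp_const_iff (by norm_num) (by norm_num)] at hr
    rcases hr with hr | hr
    · have : (0:ℝ) < c/β := by positivity
      rw [hr] at this; exact lt_irrefl _ this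
    · rw [Measure.restrict_apply_univ, Real.volume_Iic] at hr
      exact lt_irrefl _ hr
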